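/- Every f ∈ L¹([0,1];Y) (Y a Banach space) lies in some Orlicz space: there exists a Young function F (depending on f) such that ∫₀¹ F(‖f(t)‖_Y) dt < ∞. -/
import Mathlib

open MeasureTheory Filter Topology

-- aux: convexity of t ↦ max (t - c) 0 on univ
lemma aux_convex_max (c : ℝ) : ConvexOn ℝ Set.univ (fun t : ℝ => max (t - c) 0) := by
  have h1 : ConvexOn ℝ Set.univ (fun t : ℝ => t - c) :=
    (convexOn_id convex_univ).sub (concaveOn_const c convex_univ)
  have := h1.sup (convexOn_const 0 convex_univ)
  exact this

lemma aux_convex_sum (c : ℕ → ℝ) (N : ℕ) :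
    ConvexOn ℝ Set.univ (fun t : ℝ => ∑ k ∈ Finset.range N, max (t - c k) 0) := by
  induction N with
  | zero => simpa using convexOn_const (0:ℝ) convex_univ
  | succ n ih =>
      simp only [Finset.sum_range_succ]
      exact ih.add (aux_convex_max (c n))

/-- every `f ∈ L¹([0,1];Y)` lies in some Orlicz space: there is a Young
function `F` (depending on `f`) with `∫₀¹ F(‖f(t)‖) dt < ∞`. -/
theorem stmt_5
    (Y : Type*) [NormedAddCommGroup Y] [NormedSpace ℝ Y] [CompleteSpace Y]
    (f : ℝ → Y) (hf : IntegrableOn f (Set.Icc (0:ℝ) 1)) :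
    ∃ F : ℝ → ℝ,
      (∀ t ≥ (0:ℝ), 0 ≤ F t) ∧
      ConvexOn ℝ (Set.Ici 0) F ∧
      ContinuousOn F (Set.Ici 0) ∧
      MonotoneOn F (Set.Ici 0) ∧
      Tendsto (fun t => F t / t) (𝓝[>] 0) (𝓝 0) ∧
      Tendsto (fun t => F t / t) atTop atTop ∧
      IntegrableOn (fun t => F ‖f t‖) (Set.Icc (0:ℝ) 1) := by
  set μ := volume.restrict (Set.Icc (0:ℝ) 1) with hμ
  set g : ℝ → ℝ := fun t => ‖f t‖ with hgdef
  have hg : Integrable g μ := hf.norm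
  have hg0 : ∀ t, 0 ≤ g t := fun t => norm_nonneg _
  have hmeas : ∀ c : ℝ, AEStronglyMeasurable (fun t => max (g t - c) 0) μ :=
    fun c => (hg.aestronglyMeasurable.sub aestronglyMeasurable_const).sup
      aestronglyMeasurable_const
  have hint : ∀ c : ℝ, 0 ≤ c → Integrable (fun t => max (g t - c) 0) μ := by
    intro c hc
    refine Integrable.mono' hg (hmeas c) ?_
    filter_upwards with t
    rw [Real.norm_of_nonneg (le_max_right _ _)]
    exact max_le (by linarith [hg0 t]) (hg0 t)
  -- Step 1: tail integrals tend to 0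
  have h1 : Tendsto (fun n : ℕ => ∫ t, max (g t - n) 0 ∂μ) atTop (𝓝 0) := by
    have := tendsto_integral_of_dominated_convergence (μ := μ)
      (F := fun n t => max (g t - (n:ℝ)) 0) (f := fun _ => (0:ℝ)) g
      (fun n => hmeas n) hg ?_ ?_
    · simpa using this
    · intro n
      filter_upwards with t
      rw [Real.norm_of_nonneg (le_max_right _ _)]
      exact max_le (by linarith [hg0 t, Nat.cast_nonneg (α := ℝ) n]) (hg0 t)
    · filter_upwards with t
      obtain ⟨N, hN⟩ := exists_nat_ge (g t)
      refine Tendsto.congr' ?_ tendsto_const_nhds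
      filter_upwards [eventually_ge_atTop N] with n hn
      have : g t - n ≤ 0 := by
        have : (N:ℝ) ≤ n := Nat.cast_le.mpr hn
        linarith
      simp [max_eq_right this]
  -- Step 2: extract a rapidly increasing sequence
  obtain ⟨φ, hφmono, hφ⟩ := extraction_forall_of_eventually
    (P := fun k n => ∫ t, max (g t - n) 0 ∂μ ≤ (1/2:ℝ)^k)
    (fun k => h1.eventually (eventually_le_nhds (by positivity)))
  set c : ℕ → ℝ := fun k => (φ (k+1) : ℝ) with hcdef
  have hc1 : ∀ k : ℕ, (k:ℝ) + 1 ≤ c k := by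
    intro k
    have := hφmono.le_apply (x := k+1)
    have h2 : ((k+1:ℕ):ℝ) ≤ ((φ (k+1):ℕ):ℝ) := Nat.cast_le.mpr this
    push_cast at h2
    linarith
  have hc0 : ∀ k, (0:ℝ) ≤ c k := fun k => le_trans (by positivity) (hc1 k)
  have hck : ∀ k : ℕ, ∫ t, max (g t - c k) 0 ∂μ ≤ (1/2:ℝ)^k := by
    intro k
    refine le_trans (hφ (k+1)) ?_
    rw [pow_succ]
    nlinarith [pow_pos (by norm_num : (0:ℝ) < 1/2) k]
  set F : ℝ → ℝ := fun t => ∑' k, max (t - c k) 0 with hFdef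
  set S : ℕ → ℝ → ℝ := fun N t => ∑ k ∈ Finset.range N, max (t - c k) 0 with hSdef
  -- key : F agrees with partial sums
  have key : ∀ (t : ℝ) (N : ℕ), t ≤ (N:ℝ) → F t = S N t := by
    intro t N htN
    refine tsum_eq_sum ?_
    intro k hk
    have hk' : N ≤ k := by simpa using hk
    have : t ≤ c k := le_trans htN (le_trans (by exact_mod_cast Nat.cast_le.mpr hk') (by linarith [hc1 k]))
    simp [max_eq_right (by linarith : t - c k ≤ 0)]
  have hFnonneg : ∀ t, 0 ≤ F t := fun t => tsum_nonneg (fun k => le_max_right _ _)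
  have hsummable : ∀ t, Summable (fun k => max (t - c k) 0) := by
    intro t
    obtain ⟨N, hN⟩ := exists_nat_ge t
    refine summable_of_ne_finset_zero (s := Finset.range N) ?_
    intro k hk
    have hk' : N ≤ k := by simpa using hk
    have : t ≤ c k := le_trans hN (le_trans (by exact_mod_cast Nat.cast_le.mpr hk') (by linarith [hc1 k]))
    simp [max_eq_right (by linarith : t - c k ≤ 0)]
  -- continuity (on all of ℝ)
  have hScont : ∀ N, Continuous (S N) := by
    intro N
    exact continuous_finset_sum _ (fun k _ => (continuous_id.sub continuous_const).max continuous_const)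
  have hFcont : Continuous F := by
    rw [continuous_iff_continuousAt]
    intro x
    obtain ⟨N, hN⟩ := exists_nat_gt x
    refine ((hScont N).continuousAt).congr ?_
    filter_upwards [eventually_lt_nhds hN] with y hy
    exact (key y N hy.le).symm
  -- convexity
  have hFconv : ConvexOn ℝ (Set.Ici 0) F := by
    refine ⟨convex_Ici 0, ?_⟩
    intro x hx y hy a b ha hb hab
    obtain ⟨N, hN⟩ := exists_nat_ge (max x y)
    have hxN : x ≤ N := le_trans (le_max_left _ _) hN
    have hyN : y ≤ N := le_trans (le_max_right _ _) hN
    have hzN : a • x + b • y ≤ N := by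
      calc a • x + b • y ≤ a • (N:ℝ) + b • (N:ℝ) := by
            gcongr
        _ = (N:ℝ) := by rw [smul_eq_mul, smul_eq_mul]; nlinarith
    rw [key _ N hzN, key _ N hxN, key _ N hyN]
    exact (aux_convex_sum c N).2 (Set.mem_univ x) (Set.mem_univ y) ha hb hab
  -- monotonicity
  have hFmono : MonotoneOn F (Set.Ici 0) := by
    intro x _ y _ hxy
    obtain ⟨N, hN⟩ := exists_nat_ge y
    rw [key _ N (le_trans hxy hN), key _ N hN]
    refine Finset.sum_le_sum (fun k _ => ?_)
    exact max_le_max (by linarith) le_rfl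
  -- F vanishes on (-∞, 1]
  have hFzero : ∀ t : ℝ, t ≤ 1 → F t = 0 := by
    intro t ht
    have := key t 1 (by exact_mod_cast ht)
    rw [this]
    simp only [hSdef, Finset.range_one, Finset.sum_singleton]
    have : t ≤ c 0 := le_trans ht (by simpa using hc1 0)
    simp [max_eq_right (by linarith : t - c 0 ≤ 0)]
  have htend0 : Tendsto (fun t => F t / t) (𝓝[>] 0) (𝓝 0) := by
    refine Tendsto.congr' ?_ tendsto_const_nhds
    filter_upwards [Ioo_mem_nhdsGT_of_mem (by norm_num : (0:ℝ) ∈ Set.Ico 0 1)] with t ht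
    rw [hFzero t ht.2.le, zero_div]
  -- superlinear growth
  have htendTop : Tendsto (fun t => F t / t) atTop atTop := by
    rw [tendsto_atTop]
    intro M
    obtain ⟨K, hK⟩ := exists_nat_ge (M + 1)
    set C : ℝ := ∑ k ∈ Finset.range K, c k with hCdef
    have hCnn : 0 ≤ C := Finset.sum_nonneg (fun k _ => hc0 k)
    filter_upwards [eventually_ge_atTop (max C 1)] with t ht
    have ht1 : (1:ℝ) ≤ t := le_trans (le_max_right _ _) ht
    have htC : C ≤ t := le_trans (le_max_left _ _) ht
    have htpos : 0 < t := lt_of_lt_of_le one_pos ht1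
    have hFt : (K:ℝ) * t - C ≤ F t := by
      have h2 : ∑ k ∈ Finset.range K, (t - c k) ≤ S K t :=
        Finset.sum_le_sum (fun k _ => le_max_left _ _)
      have h3 : S K t ≤ F t := Summable.sum_le_tsum _ (fun k _ => le_max_right _ _) (hsummable t)
      calc (K:ℝ) * t - C = ∑ k ∈ Finset.range K, (t - c k) := by
            rw [Finset.sum_sub_distrib, Finset.sum_const, Finset.card_range, nsmul_eq_mul]
        _ ≤ F t := le_trans h2 h3
    have : M * t ≤ F t := by
      have : M * t ≤ (K:ℝ) * t - C := by nlinarith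
      linarith
    rw [le_div_iff₀ htpos]
    linarith [this]
  -- integrability
  have hintF : Integrable (fun t => F (g t)) μ := by
    refine ⟨hFcont.comp_aestronglyMeasurable hg.aestronglyMeasurable, ?_⟩
    rw [hasFiniteIntegral_iff_norm]
    have heq : ∀ t, ENNReal.ofReal ‖F (g t)‖ = ∑' k, ENNReal.ofReal (max (g t - c k) 0) := by
      intro t
      rw [Real.norm_of_nonneg (hFnonneg _), hFdef]
      exact ENNReal.ofReal_tsum_of_nonneg (fun k => le_max_right _ _) (hsummable _)
    calc ∫⁻ t, ENNReal.ofReal ‖F (g t)‖ ∂μ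
        = ∫⁻ t, ∑' k, ENNReal.ofReal (max (g t - c k) 0) ∂μ := by
          exact lintegral_congr (fun t => heq t)
      _ = ∑' k, ∫⁻ t, ENNReal.ofReal (max (g t - c k) 0) ∂μ := by
          refine lintegral_tsum (fun k => ?_)
          exact (ENNReal.measurable_ofReal.comp_aemeasurable ((hmeas (c k)).aemeasurable))
      _ ≤ ∑' k, ENNReal.ofReal ((1/2:ℝ)^k) := by
          refine ENNReal.tsum_le_tsum (fun k => ?_)
          rw [← ofReal_integral_eq_lintegral_ofReal (hint (c k) (hc0 k))
            (Filter.Eventually.of_forall (fun t => le_max_right _ _))]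
          exact ENNReal.ofReal_le_ofReal (hck k)
      _ < ⊤ := by
          rw [← ENNReal.ofReal_tsum_of_nonneg (fun k => by positivity)
            (summable_geometric_of_lt_one (by norm_num) (by norm_num))]
          exact ENNReal.ofReal_lt_top
  exact ⟨F, fun t _ => hFnonneg t, hFconv, hFcont.continuousOn, hFmono, htend0, htendTop, hintF⟩
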